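/- arXiv:2005.09528 — 2 statements merged into one kernel-verified Lean document; each statement's English description precedes it below -/
import Mathlib

section
/- Let δ₀ > 0 be such that 𝒜(P) = A − B R⁻¹ Bᵀ P is Hurwitz for every symmetric P with ‖P − P*‖_F ≤ δ₀. Then there exists d > 0, independent of P, such that for every symmetric P with ‖P − P*‖_F < δ₀ and every symmetric ΔG ∈ ℝ^{(n+m)×(n+m)} with ‖ΔG‖_F < d (with lower-left block ΔG₂₁ ∈ ℝ^{m×n} and lower-right block ΔG₂₂ ∈ ℝ^{m×m}): the matrix R + ΔG₂₂ is invertible and A − B(R + ΔG₂₂)⁻¹(BᵀP + ΔG₂₁) is Hurwitz. -/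
open Matrix MeasureTheory Filter NormedSpace
open scoped Kronecker

noncomputable section

/-- A real square matrix is Hurwitz if every eigenvalue over `ℂ` has negative real part. -/
def IsHurwitz {n : Type*} [Fintype n] [DecidableEq n] (X : Matrix n n ℝ) : Prop :=
  ∀ μ ∈ spectrum ℂ (X.map (algebraMap ℝ ℂ)), μ.re < 0

/-- The Frobenius norm of a real matrix. -/
def frobNorm {p q : Type*} [Fintype p] [Fintype q] (X : Matrix p q ℝ) : ℝ :=
  Real.sqrt (∑ i, ∑ j, (X i j) ^ 2)

/-- The spectral (ℓ²-operator) norm of a real matrix. -/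
def spec2Norm {p q : Type*} [Fintype p] [Fintype q] [DecidableEq q] (X : Matrix p q ℝ) : ℝ :=
  ‖LinearMap.toContinuousLinearMap (Matrix.toEuclideanLin X)‖

section SpecOpen

variable {α : Type*} [NormedRing α] [NormedAlgebra ℂ α] [CompleteSpace α]

lemma spec_robust (a : α) (h : ∀ μ ∈ spectrum ℂ a, μ.re < 0) :
    ∃ ε > 0, ∀ b : α, ‖b - a‖ < ε → ∀ μ ∈ spectrum ℂ b, μ.re < 0 := by
  classical
  set K : Set ℂ := {z | 0 ≤ z.re} ∩ Metric.closedBall 0 ((‖a‖ + 1) * ‖(1 : α)‖) with hK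
  have hKclosed : IsClosed K :=
    (isClosed_le continuous_const Complex.continuous_re).inter Metric.isClosed_closedBall
  have hKcomp : IsCompact K :=
    (isCompact_closedBall 0 _).of_isClosed_subset hKclosed Set.inter_subset_right
  have hKres : K ⊆ resolventSet ℂ a := by
    intro z hz
    by_contra hznot
    have : z ∈ spectrum ℂ a := hznot
    exact absurd (h z this) (not_lt.mpr hz.1)
  have hcont : ContinuousOn (resolvent a) K := fun z hz =>
    ((spectrum.hasDerivAt_resolvent (hKres hz)).continuousAt).continuousWithinAt
  obtain ⟨M, hM⟩ := hKcomp.exists_bound_of_continuousOn hcont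
  set M' : ℝ := max M 0 with hM'
  have hM'0 : 0 ≤ M' := le_max_right _ _
  refine ⟨min 1 (1 / (M' + 1)), lt_min one_pos (by positivity), fun b hb μ hμ => ?_⟩
  by_contra hre
  push_neg at hre
  have hb1 : ‖b - a‖ < 1 := hb.trans_le (min_le_left _ _)
  have hb2 : ‖b - a‖ < 1 / (M' + 1) := hb.trans_le (min_le_right _ _)
  by_cases hball : ‖μ‖ ≤ (‖a‖ + 1) * ‖(1 : α)‖
  · have hμK : μ ∈ K := ⟨hre, by simpa [Metric.mem_closedBall, dist_zero_right] using hball⟩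
    have hres : μ ∈ resolventSet ℂ a := hKres hμK
    have hu : IsUnit (algebraMap ℂ α μ - a) := hres
    set u := hu.unit with hudef
    have hval : (↑u : α) = algebraMap ℂ α μ - a := hu.unit_spec
    have hresval : resolvent a μ = (↑u⁻¹ : α) := by
      rw [resolvent, ← hval, Ring.inverse_unit]
    have hinvnorm : ‖(↑u⁻¹ : α)‖ ≤ M' := by
      rw [← hresval]; exact (hM μ hμK).trans (le_max_left _ _)
    set t : α := (↑u⁻¹ : α) * (b - a) with ht
    have htnorm : ‖t‖ < 1 := by
      calc ‖t‖ ≤ ‖(↑u⁻¹ : α)‖ * ‖b - a‖ := norm_mul_le _ _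
        _ ≤ M' * (1 / (M' + 1)) := by
            apply mul_le_mul hinvnorm hb2.le (norm_nonneg _) hM'0
        _ < 1 := by
            rw [mul_one_div, div_lt_one (by positivity)]; linarith
    have hunit2 : IsUnit (algebraMap ℂ α μ - b) := by
      have : algebraMap ℂ α μ - b = ↑u * (1 - t) := by
        rw [mul_sub, mul_one, ht, ← mul_assoc, Units.mul_inv, one_mul, hval]
        abel
      rw [this]
      exact u.isUnit.mul (Units.oneSub t htnorm).isUnit
    exact spectrum.notMem_iff.mpr hunit2 hμ
  · push_neg at hball
    have hbnorm : ‖b‖ * ‖(1 : α)‖ < ‖μ‖ := by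
      have h1 : ‖b‖ ≤ ‖a‖ + 1 := by
        calc ‖b‖ = ‖a + (b - a)‖ := by rw [add_sub_cancel]
          _ ≤ ‖a‖ + ‖b - a‖ := norm_add_le _ _
          _ ≤ ‖a‖ + 1 := by linarith
      calc ‖b‖ * ‖(1:α)‖ ≤ (‖a‖ + 1) * ‖(1:α)‖ :=
            mul_le_mul_of_nonneg_right h1 (norm_nonneg _)
        _ < ‖μ‖ := hball
    exact spectrum.notMem_iff.mpr
      (spectrum.mem_resolventSet_of_norm_lt_mul hbnorm) hμ

end SpecOpen

section HurwitzOpen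

attribute [local instance] Matrix.linftyOpNormedRing Matrix.linftyOpNormedAlgebra

lemma linfty_norm_le_of_entries {n : ℕ} (M : Matrix (Fin n) (Fin n) ℂ) (c : ℝ) (hc : 0 ≤ c)
    (h : ∀ i j, ‖M i j‖ ≤ c) : ‖M‖ ≤ n * c := by
  rw [Matrix.linfty_opNorm_def]
  have hnc : (0:ℝ) ≤ n * c := by positivity
  rw [← Real.coe_toNNReal (n * c) hnc, NNReal.coe_le_coe]
  refine Finset.sup_le fun i _ => ?_
  rw [← NNReal.coe_le_coe, Real.coe_toNNReal _ hnc, NNReal.coe_sum]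
  calc ∑ j, (‖M i j‖₊ : ℝ) = ∑ j, ‖M i j‖ := by simp
    _ ≤ ∑ _j : Fin n, c := Finset.sum_le_sum fun j _ => h i j
    _ = n * c := by simp [mul_comm]

lemma hurwitz_robust {n : ℕ} (X : Matrix (Fin n) (Fin n) ℝ) (hX : IsHurwitz X) :
    ∃ ε > 0, ∀ Y : Matrix (Fin n) (Fin n) ℝ,
      (∀ i j, |Y i j - X i j| < ε) → IsHurwitz Y := by
  obtain ⟨ε, hε, H⟩ := spec_robust (X.map (algebraMap ℝ ℂ)) hX
  refine ⟨ε / (n + 1), by positivity, fun Y hY => ?_⟩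
  apply H
  have hentry : ∀ i j, ‖(Y.map (algebraMap ℝ ℂ) - X.map (algebraMap ℝ ℂ)) i j‖ ≤ ε / (n+1) := by
    intro i j
    rw [Matrix.sub_apply, Matrix.map_apply, Matrix.map_apply, ← map_sub]
    simp only [← Complex.ofReal_sub, Complex.norm_real, Real.norm_eq_abs,
      RingHom.coe_coe, Complex.coe_algebraMap]
    exact (hY i j).le
  calc ‖Y.map (algebraMap ℝ ℂ) - X.map (algebraMap ℝ ℂ)‖ ≤ n * (ε / (n+1)) :=
        linfty_norm_le_of_entries _ _ (by positivity) hentry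
    _ < ε := by
        rw [mul_div_assoc', div_lt_iff₀ (by positivity)]
        nlinarith

end HurwitzOpen

attribute [local instance] Matrix.normedAddCommGroup Matrix.normedSpace

section MainAux

lemma entry_le_frobNorm {p q : Type*} [Fintype p] [Fintype q] (X : Matrix p q ℝ) (i : p) (j : q) :
    |X i j| ≤ frobNorm X := by
  rw [frobNorm, ← Real.sqrt_sq_eq_abs]
  apply Real.sqrt_le_sqrt
  calc (X i j) ^ 2 ≤ ∑ j', (X i j') ^ 2 :=
        Finset.single_le_sum (f := fun j' => (X i j') ^ 2) (fun j' _ => sq_nonneg _) (Finset.mem_univ j)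
    _ ≤ ∑ i', ∑ j', (X i' j') ^ 2 :=
        Finset.single_le_sum (f := fun i' => ∑ j', (X i' j') ^ 2)
          (fun i' _ => Finset.sum_nonneg fun j' _ => sq_nonneg _) (Finset.mem_univ i)

lemma frobNorm_nonneg {p q : Type*} [Fintype p] [Fintype q] (X : Matrix p q ℝ) :
    0 ≤ frobNorm X := Real.sqrt_nonneg _

lemma norm_le_frobNorm {p q : Type*} [Fintype p] [Fintype q] (X : Matrix p q ℝ) :
    ‖X‖ ≤ frobNorm X := by
  rw [Matrix.norm_le_iff (frobNorm_nonneg X)]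
  intro i j
  simpa [Real.norm_eq_abs] using entry_le_frobNorm X i j

lemma continuous_entry {p q : Type*} [Fintype p] [Fintype q] (i : p) (j : q) :
    Continuous fun M : Matrix p q ℝ => M i j :=
  (continuous_apply j).comp (continuous_apply i)

lemma continuous_frobNorm {p q : Type*} [Fintype p] [Fintype q] :
    Continuous fun M : Matrix p q ℝ => frobNorm M := by
  apply Real.continuous_sqrt.comp
  exact continuous_finset_sum _ fun i _ =>
    continuous_finset_sum _ fun j _ => (continuous_entry i j).pow 2

lemma isOpen_hurwitz {n : ℕ} : IsOpen {M : Matrix (Fin n) (Fin n) ℝ | IsHurwitz M} := by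
  refine Metric.isOpen_iff.mpr ?_
  intro X hX
  obtain ⟨ε, hε, H⟩ := hurwitz_robust X hX
  refine ⟨ε, hε, fun Y hY => H Y fun i j => ?_⟩
  rw [Metric.mem_ball, dist_eq_norm] at hY
  calc |Y i j - X i j| = ‖(Y - X) i j‖ := by simp [Real.norm_eq_abs]
    _ ≤ ‖Y - X‖ := Matrix.norm_entry_le_entrywise_sup_norm _
    _ < ε := hY

lemma isOpen_isUnit_matrix {m : ℕ} : IsOpen {M : Matrix (Fin m) (Fin m) ℝ | IsUnit M} := by
  have h : {M : Matrix (Fin m) (Fin m) ℝ | IsUnit M} = (fun M : Matrix (Fin m) (Fin m) ℝ => M.det) ⁻¹' {(0:ℝ)}ᶜ := by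
    ext M
    simp [Matrix.isUnit_iff_isUnit_det, isUnit_iff_ne_zero]
  rw [h]
  exact isOpen_compl_singleton.preimage (continuous_id.matrix_det)

end MainAux


/-- for `P` near `P*`, a small symmetric disturbance `ΔG` keeps the
updated gain well defined and stabilizing. -/
theorem disturbed_policy_update_stabilizing
    (n m : ℕ) (hn : 0 < n) (hm : 0 < m)
    (A : Matrix (Fin n) (Fin n) ℝ) (B : Matrix (Fin n) (Fin m) ℝ)
    (Q : Matrix (Fin n) (Fin n) ℝ) (R : Matrix (Fin m) (Fin m) ℝ)
    (hQ : Q.PosSemidef) (hR : R.PosDef)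
    (Pstar : Matrix (Fin n) (Fin n) ℝ) (hPstar : Pstar.PosDef)
    (hARE : Aᵀ * Pstar + Pstar * A - Pstar * B * R⁻¹ * Bᵀ * Pstar + Q = 0)
    (hAstar : IsHurwitz (A - B * R⁻¹ * Bᵀ * Pstar))
    (δ₀ : ℝ) (hδ₀ : 0 < δ₀)
    (hHurBall : ∀ P : Matrix (Fin n) (Fin n) ℝ, P.IsSymm → frobNorm (P - Pstar) ≤ δ₀ →
      IsHurwitz (A - B * R⁻¹ * Bᵀ * P)) :
    ∃ d > 0, ∀ P : Matrix (Fin n) (Fin n) ℝ, P.IsSymm → frobNorm (P - Pstar) < δ₀ →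
      ∀ ΔG : Matrix (Fin n ⊕ Fin m) (Fin n ⊕ Fin m) ℝ, ΔG.IsSymm → frobNorm ΔG < d →
        IsUnit (R + ΔG.toBlocks₂₂) ∧
        IsHurwitz (A - B * ((R + ΔG.toBlocks₂₂)⁻¹ * (Bᵀ * P + ΔG.toBlocks₂₁))) := by
  classical
  -- the perturbed closed-loop matrix as a function of (P, ΔG)
  set g : Matrix (Fin n) (Fin n) ℝ × Matrix (Fin n ⊕ Fin m) (Fin n ⊕ Fin m) ℝ →
      Matrix (Fin n) (Fin n) ℝ :=
    fun x => A - B * ((R + x.2.toBlocks₂₂)⁻¹ * (Bᵀ * x.1 + x.2.toBlocks₂₁)) with hg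
  set W : Set (Matrix (Fin n) (Fin n) ℝ × Matrix (Fin n ⊕ Fin m) (Fin n ⊕ Fin m) ℝ) :=
    {x | IsUnit (R + x.2.toBlocks₂₂)} with hW
  have hblock22 : Continuous fun x : Matrix (Fin n) (Fin n) ℝ ×
      Matrix (Fin n ⊕ Fin m) (Fin n ⊕ Fin m) ℝ => x.2.toBlocks₂₂ :=
    continuous_matrix fun i j =>
      ((continuous_entry (Sum.inr i) (Sum.inr j)).comp continuous_snd)
  have hblock21 : Continuous fun x : Matrix (Fin n) (Fin n) ℝ ×
      Matrix (Fin n ⊕ Fin m) (Fin n ⊕ Fin m) ℝ => x.2.toBlocks₂₁ :=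
    continuous_matrix fun i j =>
      ((continuous_entry (Sum.inr i) (Sum.inl j)).comp continuous_snd)
  have hWmap : Continuous fun x : Matrix (Fin n) (Fin n) ℝ ×
      Matrix (Fin n ⊕ Fin m) (Fin n ⊕ Fin m) ℝ => R + x.2.toBlocks₂₂ :=
    continuous_const.add hblock22
  have hWopen : IsOpen W := isOpen_isUnit_matrix.preimage hWmap
  have hgW : ContinuousOn g W := by
    intro x hx
    apply ContinuousAt.continuousWithinAt
    have hdet : (R + x.2.toBlocks₂₂).det ≠ 0 := by
      intro h0
      exact (isUnit_iff_ne_zero.mp ((Matrix.isUnit_iff_isUnit_det _).mp hx)) h0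
    have hinvR : ContinuousAt Ring.inverse (R + x.2.toBlocks₂₂).det := by
      rw [Ring.inverse_eq_inv']
      exact continuousAt_inv₀ hdet
    have hinvAt : ContinuousAt Inv.inv (R + x.2.toBlocks₂₂) :=
      continuousAt_matrix_inv _ hinvR
    have h1 : ContinuousAt (fun y : Matrix (Fin n) (Fin n) ℝ ×
        Matrix (Fin n ⊕ Fin m) (Fin n ⊕ Fin m) ℝ => (R + y.2.toBlocks₂₂)⁻¹) x :=
      ContinuousAt.comp (g := Inv.inv) hinvAt
        (hWmap.continuousAt :
          ContinuousAt (fun y : Matrix (Fin n) (Fin n) ℝ ×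
            Matrix (Fin n ⊕ Fin m) (Fin n ⊕ Fin m) ℝ => R + y.2.toBlocks₂₂) x)
    have h2 : Continuous fun y : Matrix (Fin n) (Fin n) ℝ ×
        Matrix (Fin n ⊕ Fin m) (Fin n ⊕ Fin m) ℝ => Bᵀ * y.1 + y.2.toBlocks₂₁ :=
      (continuous_const.matrix_mul continuous_fst).add hblock21
    have hmul : Continuous fun p : Matrix (Fin m) (Fin m) ℝ × Matrix (Fin m) (Fin n) ℝ =>
        p.1 * p.2 := continuous_fst.matrix_mul continuous_snd
    have h3 : ContinuousAt (fun y : Matrix (Fin n) (Fin n) ℝ ×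
        Matrix (Fin n ⊕ Fin m) (Fin n ⊕ Fin m) ℝ =>
        (R + y.2.toBlocks₂₂)⁻¹ * (Bᵀ * y.1 + y.2.toBlocks₂₁)) x :=
      ContinuousAt.comp (g := fun p : Matrix (Fin m) (Fin m) ℝ × Matrix (Fin m) (Fin n) ℝ =>
          p.1 * p.2) (f := fun y : Matrix (Fin n) (Fin n) ℝ ×
          Matrix (Fin n ⊕ Fin m) (Fin n ⊕ Fin m) ℝ =>
          ((R + y.2.toBlocks₂₂)⁻¹, Bᵀ * y.1 + y.2.toBlocks₂₁)) hmul.continuousAt (ContinuousAt.prodMk h1 h2.continuousAt)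
    have h4 : Continuous fun M : Matrix (Fin m) (Fin n) ℝ => A - B * M :=
      continuous_const.sub (continuous_const.matrix_mul continuous_id)
    exact h4.continuousAt.comp h3
  set U : Set (Matrix (Fin n) (Fin n) ℝ × Matrix (Fin n ⊕ Fin m) (Fin n ⊕ Fin m) ℝ) :=
    W ∩ g ⁻¹' {M | IsHurwitz M} with hU
  have hUopen : IsOpen U := hgW.isOpen_inter_preimage hWopen isOpen_hurwitz
  set K : Set (Matrix (Fin n) (Fin n) ℝ) :=
    {P | P.IsSymm ∧ frobNorm (P - Pstar) ≤ δ₀} with hKdef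
  have hKclosed : IsClosed K := by
    apply IsClosed.inter
    · exact isClosed_eq (continuous_id.matrix_transpose) continuous_id
    · exact isClosed_le (continuous_frobNorm.comp (continuous_id.sub continuous_const))
        continuous_const
  have hKsub : K ⊆ Metric.closedBall Pstar δ₀ := by
    intro P hP
    rw [Metric.mem_closedBall, dist_eq_norm]
    exact (norm_le_frobNorm _).trans hP.2
  have hKcomp : IsCompact K :=
    (isCompact_closedBall Pstar δ₀).of_isClosed_subset hKclosed hKsub
  have hRunit : IsUnit R :=
    (Matrix.isUnit_iff_isUnit_det R).mpr (isUnit_iff_ne_zero.mpr hR.det_pos.ne')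
  have hsub0 : K ×ˢ ({0} : Set (Matrix (Fin n ⊕ Fin m) (Fin n ⊕ Fin m) ℝ)) ⊆ U := by
    rintro ⟨P, E⟩ ⟨hPK, hE⟩
    have hE0 : E = 0 := hE
    subst hE0
    have hb22 : (0 : Matrix (Fin n ⊕ Fin m) (Fin n ⊕ Fin m) ℝ).toBlocks₂₂ = 0 := rfl
    have hb21 : (0 : Matrix (Fin n ⊕ Fin m) (Fin n ⊕ Fin m) ℝ).toBlocks₂₁ = 0 := rfl
    constructor
    · show IsUnit (R + (0 : Matrix (Fin n ⊕ Fin m) (Fin n ⊕ Fin m) ℝ).toBlocks₂₂)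
      rw [hb22, add_zero]
      exact hRunit
    · show IsHurwitz (g (P, 0))
      have hgval : g (P, 0) = A - B * R⁻¹ * Bᵀ * P := by
        rw [hg]
        simp only [hb22, hb21, add_zero]
        rw [← Matrix.mul_assoc, ← Matrix.mul_assoc]
      rw [hgval]
      exact hHurBall P hPK.1 hPK.2
  obtain ⟨u, v, hu, hv, hKu, h0v, huv⟩ :=
    generalized_tube_lemma hKcomp isCompact_singleton hUopen hsub0
  obtain ⟨d, hd, hball⟩ := Metric.isOpen_iff.mp hv 0 (h0v rfl)
  refine ⟨d, hd, fun P hPs hPlt ΔG hGs hGlt => ?_⟩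
  have hPK : P ∈ K := ⟨hPs, hPlt.le⟩
  have hGv : ΔG ∈ v := by
    apply hball
    rw [Metric.mem_ball, dist_zero_right]
    exact (norm_le_frobNorm _).trans_lt hGlt
  have hxU : (P, ΔG) ∈ U := huv ⟨hKu hPK, hGv⟩
  exact ⟨hxU.1, hxU.2⟩
end
end

section
/- (Converging disturbance implies convergence) Let σ ∈ (0,1) and δ₀ > 0 be such that for every symmetric P with ‖P − P*‖_F < δ₀, 𝒜(P) is Hurwitz and the unique symmetric solution P' of 𝒜(P)ᵀP' + P'𝒜(P) = −(Q + P B R⁻¹ Bᵀ P) satisfies ‖P' − P*‖_F ≤ σ‖P − P*‖_F. Then there exists δ₁ > 0 such that: for every robust policy-iteration data (ΔG_i, P̃_i, K̂_i)_{i≥1} together with a symmetric P̃₀ satisfying ‖P̃₀ − P*‖_F < δ₀ and K̂₁ = R⁻¹BᵀP̃₀, if sup_{i≥1} ‖ΔG_i‖_F < δ₁ and lim_{i→∞} ‖ΔG_i‖_F = 0, then lim_{i→∞} ‖P̃_i − P*‖_F = 0. -/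
open Matrix MeasureTheory Filter NormedSpace
open scoped Kronecker

noncomputable section

attribute [local instance] Matrix.normedAddCommGroup Matrix.normedSpace

namespace RPIAux

section Euc
variable {p q : Type*} [Fintype p] [Fintype q]

/-- Matrices viewed as a Euclidean space. -/
def toEuc : Matrix p q ℝ ≃ₗ[ℝ] EuclideanSpace ℝ (p × q) :=
  (LinearEquiv.curry ℝ ℝ p q).symm.trans (WithLp.linearEquiv 2 ℝ ((p × q) → ℝ)).symm

lemma frobNorm_eq (X : Matrix p q ℝ) : frobNorm X = ‖toEuc X‖ := by
  rw [EuclideanSpace.norm_eq]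
  simp only [frobNorm, Fintype.sum_prod_type]
  congr 1
  refine Finset.sum_congr rfl fun i _ => Finset.sum_congr rfl fun j _ => ?_
  rw [Real.norm_eq_abs, sq_abs]
  rfl

lemma frobNorm_add_le (X Y : Matrix p q ℝ) :
    frobNorm (X + Y) ≤ frobNorm X + frobNorm Y := by
  simp only [frobNorm_eq, map_add]; exact norm_add_le _ _

lemma frobNorm_neg (X : Matrix p q ℝ) : frobNorm (-X) = frobNorm X := by
  simp only [frobNorm_eq, map_neg, norm_neg]

lemma frobNorm_sub_le (X Y : Matrix p q ℝ) :
    frobNorm (X - Y) ≤ frobNorm X + frobNorm Y := by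
  rw [sub_eq_add_neg]
  exact (frobNorm_add_le _ _).trans (by rw [frobNorm_neg])

end Euc

variable {p q r : Type*} [Fintype p] [Fintype q] [Fintype r]

lemma frobNorm_nonneg (X : Matrix p q ℝ) : 0 ≤ frobNorm X := Real.sqrt_nonneg _

lemma norm_le_frobNorm (X : Matrix p q ℝ) : ‖X‖ ≤ frobNorm X := by
  rw [Matrix.norm_le_iff (frobNorm_nonneg X)]
  intro i j
  rw [Real.norm_eq_abs, ← Real.sqrt_sq_eq_abs]
  apply Real.sqrt_le_sqrt
  calc (X i j)^2 ≤ ∑ j', (X i j')^2 :=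
        Finset.single_le_sum (f := fun j' => (X i j')^2)
          (fun _ _ => sq_nonneg _) (Finset.mem_univ j)
    _ ≤ ∑ i', ∑ j', (X i' j')^2 :=
        Finset.single_le_sum (f := fun i' => ∑ j', (X i' j')^2)
          (fun _ _ => Finset.sum_nonneg fun _ _ => sq_nonneg _) (Finset.mem_univ i)

lemma frobNorm_le (X : Matrix p q ℝ) :
    frobNorm X ≤ Real.sqrt (Fintype.card p * Fintype.card q) * ‖X‖ := by
  rw [← Real.sqrt_sq (norm_nonneg X), ← Real.sqrt_mul (by positivity)]
  apply Real.sqrt_le_sqrt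
  calc ∑ i, ∑ j, (X i j)^2 ≤ ∑ _i : p, ∑ _j : q, ‖X‖^2 := by
        refine Finset.sum_le_sum fun i _ => Finset.sum_le_sum fun j _ => ?_
        rw [← sq_abs, ← Real.norm_eq_abs]
        exact pow_le_pow_left₀ (norm_nonneg _) (Matrix.norm_entry_le_entrywise_sup_norm X) 2
    _ = (Fintype.card p * Fintype.card q) * ‖X‖^2 := by
        rw [Finset.sum_const, Finset.sum_const, Finset.card_univ, Finset.card_univ,
          nsmul_eq_mul, nsmul_eq_mul]
        push_cast; ring

lemma frobNorm_mul_le (X : Matrix p q ℝ) (Y : Matrix q r ℝ) :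
    frobNorm (X * Y) ≤ frobNorm X * frobNorm Y := by
  have key : ∑ i, ∑ j, ((X * Y) i j)^2 ≤ (∑ i, ∑ k, (X i k)^2) * (∑ k, ∑ j, (Y k j)^2) := by
    calc ∑ i, ∑ j, ((X * Y) i j)^2
        ≤ ∑ i, ∑ j, (∑ k, (X i k)^2) * (∑ k, (Y k j)^2) := by
          refine Finset.sum_le_sum fun i _ => Finset.sum_le_sum fun j _ => ?_
          simpa [Matrix.mul_apply] using
            Finset.sum_mul_sq_le_sq_mul_sq Finset.univ (fun k => X i k) (fun k => Y k j)
      _ = (∑ i, ∑ k, (X i k)^2) * (∑ j, ∑ k, (Y k j)^2) :=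
          (Finset.sum_mul_sum Finset.univ Finset.univ (fun i => ∑ k, (X i k)^2) (fun j => ∑ k, (Y k j)^2)).symm
      _ = (∑ i, ∑ k, (X i k)^2) * (∑ k, ∑ j, (Y k j)^2) := by
          rw [Finset.sum_comm (f := fun j k => (Y k j)^2)]
  calc frobNorm (X * Y) ≤ Real.sqrt ((∑ i, ∑ k, (X i k)^2) * (∑ k, ∑ j, (Y k j)^2)) :=
        Real.sqrt_le_sqrt key
    _ = frobNorm X * frobNorm Y := by
        rw [Real.sqrt_mul (by positivity)]; rfl

lemma frobNorm_transpose (X : Matrix p q ℝ) : frobNorm Xᵀ = frobNorm X := by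
  unfold frobNorm
  rw [Finset.sum_comm]
  rfl

lemma frobNorm_toBlocks₂₁_le (X : Matrix (p ⊕ q) (p ⊕ q) ℝ) :
    frobNorm X.toBlocks₂₁ ≤ frobNorm X := by
  apply Real.sqrt_le_sqrt
  calc ∑ i, ∑ j, (X.toBlocks₂₁ i j)^2 = ∑ i : q, ∑ j : p, (X (Sum.inr i) (Sum.inl j))^2 := rfl
    _ ≤ ∑ i, ∑ j, (X i j)^2 := by
       rw [Fintype.sum_sum_type]
       refine le_add_of_nonneg_of_le (by positivity) ?_
       refine Finset.sum_le_sum fun i _ => ?_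
       rw [Fintype.sum_sum_type]
       exact le_add_of_le_of_nonneg le_rfl (by positivity)

lemma frobNorm_toBlocks₂₂_le (X : Matrix (p ⊕ q) (p ⊕ q) ℝ) :
    frobNorm X.toBlocks₂₂ ≤ frobNorm X := by
  apply Real.sqrt_le_sqrt
  calc ∑ i, ∑ j, (X.toBlocks₂₂ i j)^2 = ∑ i : q, ∑ j : q, (X (Sum.inr i) (Sum.inr j))^2 := rfl
    _ ≤ ∑ i, ∑ j, (X i j)^2 := by
       rw [Fintype.sum_sum_type]
       refine le_add_of_nonneg_of_le (by positivity) ?_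
       refine Finset.sum_le_sum fun i _ => ?_
       rw [Fintype.sum_sum_type]
       exact le_add_of_nonneg_of_le (by positivity) le_rfl


variable {n : Type*} [Fintype n] [DecidableEq n]

lemma eval_charpoly' (M : Matrix n n ℂ) (μ : ℂ) :
    (M.charpoly).eval μ = (μ • (1 : Matrix n n ℂ) - M).det := by
  unfold Matrix.charpoly
  rw [← Polynomial.coe_evalRingHom, RingHom.map_det]
  congr 1
  ext i j
  by_cases h : i = j <;>
    simp [h, Matrix.charmatrix_apply, Matrix.one_apply, Matrix.diagonal, Ne.symm]

lemma mem_spectrum_of_det (M : Matrix n n ℂ) (μ : ℂ)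
    (h : (μ • (1 : Matrix n n ℂ) - M).det = 0) : μ ∈ spectrum ℂ M := by
  rw [spectrum.mem_iff, Algebra.algebraMap_eq_smul_one]
  rw [Matrix.isUnit_iff_isUnit_det, h]
  exact not_isUnit_zero

lemma lyap_inj_complex (M : Matrix n n ℂ) (hM : ∀ μ ∈ spectrum ℂ M, μ.re < 0)
    (X : Matrix n n ℂ) (hX : Mᵀ * X + X * M = 0) : X = 0 := by
  have hMX : Mᵀ * X = -(X * M) := by
    have := hX; rw [add_eq_zero_iff_eq_neg] at this; exact this
  have hcomm : ∀ k : ℕ, Mᵀ ^ k * X = X * (-M) ^ k := by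
    intro k; induction k with
    | zero => simp
    | succ k ih =>
      calc Mᵀ ^ (k+1) * X = Mᵀ ^ k * (Mᵀ * X) := by rw [pow_succ, mul_assoc]
        _ = Mᵀ ^ k * X * -M := by rw [hMX]; noncomm_ring
        _ = X * (-M) ^ k * -M := by rw [ih]
        _ = X * (-M) ^ (k+1) := by rw [pow_succ, mul_assoc]
  have hpoly : ∀ q : Polynomial ℂ,
      (Polynomial.aeval Mᵀ q) * X = X * (Polynomial.aeval (-M) q) := by
    intro q
    rw [Polynomial.aeval_eq_sum_range (p := q) Mᵀ,
      Polynomial.aeval_eq_sum_range (p := q) (-M), Finset.sum_mul, Finset.mul_sum]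
    refine Finset.sum_congr rfl fun k _ => ?_
    rw [smul_mul_assoc, mul_smul_comm, hcomm]
  have hq := hpoly ((-M).charpoly)
  rw [Matrix.aeval_self_charpoly, mul_zero] at hq
  have hunit : IsUnit (Polynomial.aeval Mᵀ ((-M).charpoly)) := by
    have hs : ((-M).charpoly).Splits := IsAlgClosed.splits _
    have hfact := Polynomial.Splits.eq_prod_roots_of_monic hs ((-M).charpoly_monic)
    set s := Multiset.map (fun a => Polynomial.X - Polynomial.C a) ((-M).charpoly).roots with hs'
    have hfact2 : (-M).charpoly = s.toList.prod := by rw [Multiset.prod_toList]; exact hfact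
    rw [hfact2, map_list_prod]
    apply List.prod_isUnit
    intro x hx
    simp only [List.mem_map] at hx
    obtain ⟨y, hyl, rfl⟩ := hx
    have hy : y ∈ s := Multiset.mem_toList.mp hyl
    rw [hs', Multiset.mem_map] at hy
    obtain ⟨μ, hμ, rfl⟩ := hy
    have hroot : ((-M).charpoly).IsRoot μ := Polynomial.isRoot_of_mem_roots hμ
    have hμs : -μ ∈ spectrum ℂ M := by
      apply mem_spectrum_of_det
      have h1 : (-μ) • (1 : Matrix n n ℂ) - M = -(μ • (1:Matrix n n ℂ) - -M) := by
        rw [neg_smul, neg_sub]; abel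
      rw [h1, Matrix.det_neg]
      have h2 : (μ • (1 : Matrix n n ℂ) - -M).det = 0 := by
        rw [← eval_charpoly']; exact hroot
      rw [h2, mul_zero]
    have hre : (0:ℝ) < μ.re := by
      have := hM _ hμs; simpa using this
    rw [map_sub, Polynomial.aeval_X, Polynomial.aeval_C]
    by_contra hnu
    have hμM : μ ∈ spectrum ℂ M := by
      rw [spectrum.mem_iff, Algebra.algebraMap_eq_smul_one]
      intro hc
      apply hnu
      rw [Matrix.isUnit_iff_isUnit_det] at hc ⊢
      have h3 : Mᵀ - algebraMap ℂ (Matrix n n ℂ) μ = -((μ • (1:Matrix n n ℂ) - M)ᵀ) := by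
        rw [Algebra.algebraMap_eq_smul_one, Matrix.transpose_sub, Matrix.transpose_smul,
          Matrix.transpose_one, neg_sub]
      rw [h3, Matrix.det_neg, Matrix.det_transpose]
      rw [isUnit_iff_ne_zero] at hc ⊢
      intro h4
      rcases mul_eq_zero.mp h4 with h5 | h5
      · exact pow_ne_zero _ (by norm_num) h5
      · exact hc h5
    have := hM _ hμM; linarith
  obtain ⟨u, hu⟩ := hunit
  calc X = 1 * X := (one_mul X).symm
    _ = (↑u⁻¹ * ↑u) * X := by rw [u.inv_mul]
    _ = ↑u⁻¹ * ((Polynomial.aeval Mᵀ ((-M).charpoly)) * X) := by rw [mul_assoc, hu]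
    _ = 0 := by rw [hq, mul_zero]

/-- The Lyapunov operator as a linear map. -/
def lyapLM (M : Matrix n n ℝ) : Matrix n n ℝ →ₗ[ℝ] Matrix n n ℝ where
  toFun X := Mᵀ * X + X * M
  map_add' X Y := by noncomm_ring
  map_smul' c X := by simp [mul_smul_comm, smul_mul_assoc, smul_add]

lemma lyapLM_bijective {M : Matrix n n ℝ} (hM : IsHurwitz M) :
    Function.Bijective (lyapLM M) := by
  rw [Function.Bijective, ← LinearMap.injective_iff_surjective, and_self]
  rw [injective_iff_map_eq_zero]
  intro X hX0
  have h0 : Mᵀ * X + X * M = 0 := hX0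
  have hC : (M.map (algebraMap ℝ ℂ))ᵀ * (X.map (algebraMap ℝ ℂ))
      + (X.map (algebraMap ℝ ℂ)) * (M.map (algebraMap ℝ ℂ)) = 0 := by
    have h1 := congrArg (RingHom.mapMatrix (algebraMap ℝ ℂ)) h0
    simp only [map_add, map_zero, RingHom.mapMatrix_apply, Matrix.map_mul,
      Matrix.transpose_map] at h1
    exact h1
  have h2 := lyap_inj_complex _ hM _ hC
  ext i j
  have h3 := congrFun (congrFun h2 i) j
  simp only [Matrix.map_apply, Matrix.zero_apply] at h3
  simp only [Matrix.zero_apply]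
  exact (map_eq_zero_iff _ (algebraMap ℝ ℂ).injective).mp h3

/-- The Lyapunov operator, as a linear map into continuous linear maps. -/
def lyapCLM (M : Matrix n n ℝ) : Matrix n n ℝ →L[ℝ] Matrix n n ℝ :=
  LinearMap.toContinuousLinearMap (lyapLM M)

lemma lyapCLM_apply (M X : Matrix n n ℝ) : lyapCLM M X = Mᵀ * X + X * M := rfl

def lyapF : Matrix n n ℝ →ₗ[ℝ] (Matrix n n ℝ →L[ℝ] Matrix n n ℝ) where
  toFun M := lyapCLM M
  map_add' M N := by
    ext X
    simp [lyapCLM_apply, ContinuousLinearMap.add_apply, Matrix.transpose_add,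
      add_mul, mul_add]
    abel
  map_smul' c M := by
    ext X
    simp [lyapCLM_apply, Matrix.transpose_smul, smul_mul_assoc, mul_smul_comm, smul_add, mul_add]

lemma lyapF_unit {M : Matrix n n ℝ} (hM : IsHurwitz M) :
    ∃ u : (Matrix n n ℝ →L[ℝ] Matrix n n ℝ)ˣ, (u : Matrix n n ℝ →L[ℝ] Matrix n n ℝ) = lyapF M := by
  have hbij := lyapLM_bijective hM
  let e : Matrix n n ℝ ≃ₗ[ℝ] Matrix n n ℝ := LinearEquiv.ofBijective (lyapLM M) hbij
  let eC : Matrix n n ℝ ≃L[ℝ] Matrix n n ℝ := e.toContinuousLinearEquiv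
  refine ⟨⟨lyapF M, (eC.symm : Matrix n n ℝ →L[ℝ] Matrix n n ℝ), ?_, ?_⟩, rfl⟩
  · refine ContinuousLinearMap.ext fun X => ?_
    rw [ContinuousLinearMap.mul_apply, ContinuousLinearMap.one_apply]
    show (lyapLM M) (eC.symm X) = X
    have h1 : (eC.symm X) = e.symm X := rfl
    rw [h1]
    exact e.apply_symm_apply X
  · refine ContinuousLinearMap.ext fun X => ?_
    rw [ContinuousLinearMap.mul_apply, ContinuousLinearMap.one_apply]
    show eC.symm ((lyapLM M) X) = X
    have h1 : (lyapLM M) X = e X := rfl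
    rw [h1]
    exact e.symm_apply_apply X

instance lyapEndNormedRing : NormedRing (Matrix n n ℝ →L[ℝ] Matrix n n ℝ) :=
  ContinuousLinearMap.toNormedRing

instance lyapEndComplete :
    @CompleteSpace (Matrix n n ℝ →L[ℝ] Matrix n n ℝ)
      (lyapEndNormedRing (n := n)).toPseudoMetricSpace.toUniformSpace := by
  have : CompleteSpace (Matrix n n ℝ →L[ℝ] Matrix n n ℝ) := FiniteDimensional.complete ℝ _
  exact this

lemma uniform_lyap_bound (S : Set (Matrix n n ℝ)) (hScomp : IsCompact S)
    (hSne : S.Nonempty) (hSH : ∀ M ∈ S, IsHurwitz M) :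
    ∃ C > 0, ∀ M ∈ S, ∀ X : Matrix n n ℝ,
      frobNorm X ≤ C * frobNorm (Mᵀ * X + X * M) := by
  have hFc : Continuous (fun M : Matrix n n ℝ => (lyapF M : Matrix n n ℝ →L[ℝ] Matrix n n ℝ)) :=
    (lyapF (n := n)).continuous_of_finiteDimensional
  have hcont : ContinuousOn (fun M => ‖Ring.inverse (lyapF (n := n) M)‖) S := by
    intro M₀ hM₀
    obtain ⟨u, hu⟩ := lyapF_unit (hSH M₀ hM₀)
    apply ContinuousAt.continuousWithinAt
    apply ContinuousAt.norm
    have h2 : ContinuousAt Ring.inverse (lyapF M₀) := by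
      rw [← hu]; exact NormedRing.inverse_continuousAt u
    exact h2.comp hFc.continuousAt
  obtain ⟨M₀, hM₀, hmax⟩ := hScomp.exists_isMaxOn hSne hcont
  set C₀ : ℝ := ‖Ring.inverse (lyapF (n := n) M₀)‖ with hC₀
  refine ⟨Real.sqrt (Fintype.card n * Fintype.card n) * C₀ + 1, by positivity, ?_⟩
  intro M hM X
  obtain ⟨u, hu⟩ := lyapF_unit (hSH M hM)
  have hX : X = Ring.inverse (lyapF M) (Mᵀ * X + X * M) := by
    rw [← hu, Ring.inverse_unit]
    have : (u : Matrix n n ℝ →L[ℝ] Matrix n n ℝ) X = Mᵀ * X + X * M := by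
      rw [hu]; rfl
    rw [← this]
    have h3 := ContinuousLinearMap.ext_iff.mp u.inv_mul X
    rw [ContinuousLinearMap.mul_apply, ContinuousLinearMap.one_apply] at h3
    exact h3.symm
  have hXb : ‖X‖ ≤ C₀ * ‖Mᵀ * X + X * M‖ := by
    calc ‖X‖ = ‖Ring.inverse (lyapF M) (Mᵀ * X + X * M)‖ := by rw [← hX]
      _ ≤ ‖Ring.inverse (lyapF M)‖ * ‖Mᵀ * X + X * M‖ :=
          ContinuousLinearMap.le_opNorm _ _
      _ ≤ C₀ * ‖Mᵀ * X + X * M‖ := by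
          apply mul_le_mul_of_nonneg_right (hmax hM) (norm_nonneg _)
  calc frobNorm X ≤ Real.sqrt (Fintype.card n * Fintype.card n) * ‖X‖ := frobNorm_le X
    _ ≤ Real.sqrt (Fintype.card n * Fintype.card n) * (C₀ * ‖Mᵀ * X + X * M‖) :=
        mul_le_mul_of_nonneg_left hXb (Real.sqrt_nonneg _)
    _ ≤ (Real.sqrt (Fintype.card n * Fintype.card n) * C₀ + 1) * frobNorm (Mᵀ * X + X * M) := by
        rw [← mul_assoc]
        apply mul_le_mul (le_add_of_nonneg_right zero_le_one)
          (norm_le_frobNorm _) (norm_nonneg _)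
        positivity


variable {p' q' r' s' : Type*} [Fintype p'] [Fintype q'] [Fintype r'] [Fintype s']

lemma frobNorm_mul₃_le (X : Matrix p' q' ℝ) (Y : Matrix q' r' ℝ) (Z : Matrix r' s' ℝ) :
    frobNorm (X * Y * Z) ≤ frobNorm X * frobNorm Y * frobNorm Z :=
  (frobNorm_mul_le (X * Y) Z).trans
    (mul_le_mul_of_nonneg_right (frobNorm_mul_le X Y) (frobNorm_nonneg Z))

lemma frobNorm_le_add (X Y : Matrix p' q' ℝ) :
    frobNorm X ≤ frobNorm (X - Y) + frobNorm Y := by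
  have h := frobNorm_add_le (X - Y) Y
  rwa [sub_add_cancel] at h

lemma frobNorm_sub_le₃ (X Y Z : Matrix p' q' ℝ) :
    frobNorm (X - Z) ≤ frobNorm (X - Y) + frobNorm (Y - Z) := by
  have h := frobNorm_add_le (X - Y) (Y - Z)
  rwa [sub_add_sub_cancel] at h

lemma iss_limit (σ : ℝ) (hσ0 : 0 < σ) (hσ1 : σ < 1) (r c : ℝ) (hc : 0 ≤ c)
    (e d : ℕ → ℝ) (he0 : ∀ i, 0 ≤ e i) (hbd : ∀ i, 1 ≤ i → e i ≤ r)
    (hd0 : ∀ i, 0 ≤ d i)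
    (hrec : ∀ i, 1 ≤ i → e (i + 1) ≤ σ * e i + c * d i)
    (htend : Tendsto d atTop (nhds 0)) :
    Tendsto e atTop (nhds 0) := by
  have hr0 : 0 ≤ r := le_trans (he0 1) (hbd 1 le_rfl)
  rw [Metric.tendsto_atTop]
  intro ε hε
  have hσ' : 0 < 1 - σ := by linarith
  obtain ⟨I₀, hI₀⟩ := Metric.tendsto_atTop.mp htend ((1 - σ) * ε / (4 * (c + 1)))
    (by positivity)
  set I := max I₀ 1 with hI
  have hI1 : 1 ≤ I := le_max_right _ _
  have hcd : ∀ i, I ≤ i → c * d i ≤ (1 - σ) * ε / 4 := by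
    intro i hi
    have h1 := hI₀ i (le_trans (le_max_left _ _) hi)
    rw [Real.dist_eq, sub_zero, abs_of_nonneg (hd0 i)] at h1
    have h2 : c * d i ≤ c * ((1 - σ) * ε / (4 * (c + 1))) :=
      mul_le_mul_of_nonneg_left h1.le hc
    have h3 : c * ((1 - σ) * ε / (4 * (c + 1))) ≤ (1 - σ) * ε / 4 := by
      rw [mul_div_assoc', div_le_div_iff₀ (by positivity) (by norm_num)]
      nlinarith [mul_pos hσ' hε, mul_nonneg (mul_nonneg hσ'.le hε.le) hc]
    linarith
  have hkey : ∀ k, e (I + k) ≤ σ ^ k * r + ε / 4 := by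
    intro k; induction k with
    | zero =>
      simp only [Nat.add_zero, pow_zero, one_mul]
      have := hbd I hI1; linarith
    | succ k ih =>
      have h1 : 1 ≤ I + k := le_trans hI1 (Nat.le_add_right _ _)
      have h2 := hrec (I + k) h1
      have h3 := hcd (I + k) (Nat.le_add_right _ _)
      have h4 : σ * e (I + k) ≤ σ * (σ ^ k * r + ε / 4) :=
        mul_le_mul_of_nonneg_left ih hσ0.le
      have h5 : e (I + (k + 1)) = e ((I + k) + 1) := by ring_nf
      rw [h5]
      have h6 : σ * ε / 4 + (1 - σ) * ε / 4 = ε / 4 := by ring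
      have : σ * (σ ^ k * r) = σ ^ (k + 1) * r := by ring
      nlinarith
  obtain ⟨k₀, hk₀⟩ := ((tendsto_pow_atTop_nhds_zero_of_lt_one hσ0.le hσ1).eventually
    (eventually_lt_nhds (show (0:ℝ) < ε / (2 * (r + 1)) by positivity))).exists
  refine ⟨I + k₀, fun i hi => ?_⟩
  have hik : e i ≤ σ ^ (i - I) * r + ε / 4 := by
    have h7 := hkey (i - I)
    rwa [show I + (i - I) = i by omega] at h7
  have hpow : σ ^ (i - I) ≤ σ ^ k₀ := by
    apply pow_le_pow_of_le_one hσ0.le hσ1.le (by omega)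
  have hσr : σ ^ k₀ * r ≤ ε / 2 := by
    have h1 : σ ^ k₀ * r ≤ (ε / (2 * (r + 1))) * r :=
      mul_le_mul_of_nonneg_right hk₀.le hr0
    have h2 : (ε / (2 * (r + 1))) * r ≤ ε / 2 := by
      rw [div_mul_eq_mul_div, div_le_div_iff₀ (by positivity) (by norm_num)]
      nlinarith
    linarith
  rw [Real.dist_eq, sub_zero, abs_of_nonneg (he0 i)]
  have : σ ^ (i - I) * r ≤ σ ^ k₀ * r := mul_le_mul_of_nonneg_right hpow hr0
  linarith


end RPIAux

/-- Robust policy-iteration data: for every `i ≥ 1`, the disturbance `ΔG i` and the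
matrix `P̃ i` are symmetric, `P̃ i` solves the policy-evaluation Lyapunov equation for
the gain `K̂ i`, and the next gain `K̂ (i+1)` solves the disturbed policy-update
equation `(R + ΔG_{i,22}) K̂_{i+1} = Bᵀ P̃_i + ΔG_{i,21}`. -/
def IsRPIData (n m : ℕ)
    (A : Matrix (Fin n) (Fin n) ℝ) (B : Matrix (Fin n) (Fin m) ℝ)
    (Q : Matrix (Fin n) (Fin n) ℝ) (R : Matrix (Fin m) (Fin m) ℝ)
    (ΔG : ℕ → Matrix (Fin n ⊕ Fin m) (Fin n ⊕ Fin m) ℝ)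
    (Pt : ℕ → Matrix (Fin n) (Fin n) ℝ)
    (Kh : ℕ → Matrix (Fin m) (Fin n) ℝ) : Prop :=
  ∀ i, 1 ≤ i →
    (ΔG i).IsSymm ∧ (Pt i).IsSymm ∧
    (A - B * Kh i)ᵀ * Pt i + Pt i * (A - B * Kh i) + Q + (Kh i)ᵀ * R * (Kh i) = 0 ∧
    (R + (ΔG i).toBlocks₂₂) * Kh (i + 1) = Bᵀ * Pt i + (ΔG i).toBlocks₂₁

set_option maxHeartbeats 1600000

/-- if the disturbances are small and converge to zero, the robust policy
iteration converges to the optimal solution `P*`. -/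
theorem robust_policy_iteration_converging_disturbance
    (n m : ℕ) (hn : 0 < n) (hm : 0 < m)
    (A : Matrix (Fin n) (Fin n) ℝ) (B : Matrix (Fin n) (Fin m) ℝ)
    (Q : Matrix (Fin n) (Fin n) ℝ) (R : Matrix (Fin m) (Fin m) ℝ)
    (hQ : Q.PosSemidef) (hR : R.PosDef)
    (Pstar : Matrix (Fin n) (Fin n) ℝ) (hPstar : Pstar.PosDef)
    (hARE : Aᵀ * Pstar + Pstar * A - Pstar * B * R⁻¹ * Bᵀ * Pstar + Q = 0)
    (hAstar : IsHurwitz (A - B * R⁻¹ * Bᵀ * Pstar))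
    (σ : ℝ) (hσ0 : 0 < σ) (hσ1 : σ < 1) (δ₀ : ℝ) (hδ₀ : 0 < δ₀)
    (hcontract : ∀ P : Matrix (Fin n) (Fin n) ℝ, P.IsSymm → frobNorm (P - Pstar) < δ₀ →
      IsHurwitz (A - B * R⁻¹ * Bᵀ * P) ∧
      ∀ P' : Matrix (Fin n) (Fin n) ℝ, P'.IsSymm →
        (A - B * R⁻¹ * Bᵀ * P)ᵀ * P' + P' * (A - B * R⁻¹ * Bᵀ * P)
            = -(Q + P * B * R⁻¹ * Bᵀ * P) →
        frobNorm (P' - Pstar) ≤ σ * frobNorm (P - Pstar)) :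
    ∃ δ₁ > 0,
      ∀ ΔG : ℕ → Matrix (Fin n ⊕ Fin m) (Fin n ⊕ Fin m) ℝ,
      ∀ Pt : ℕ → Matrix (Fin n) (Fin n) ℝ, ∀ Kh : ℕ → Matrix (Fin m) (Fin n) ℝ,
        IsRPIData n m A B Q R ΔG Pt Kh →
        (Pt 0).IsSymm → frobNorm (Pt 0 - Pstar) < δ₀ → Kh 1 = R⁻¹ * Bᵀ * Pt 0 →
        BddAbove (Set.range fun j => frobNorm (ΔG (j + 1))) →
        (⨆ j : ℕ, frobNorm (ΔG (j + 1))) < δ₁ →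
        Tendsto (fun i => frobNorm (ΔG i)) atTop (nhds 0) →
        Tendsto (fun i => frobNorm (Pt i - Pstar)) atTop (nhds 0) := by
    classical
  have hRdet : IsUnit R.det := isUnit_iff_ne_zero.mpr (ne_of_gt hR.det_pos)
  have hRsym : Rᵀ = R := by
    rw [← Matrix.conjTranspose_eq_transpose_of_trivial]; exact hR.1
  have hRisym : R⁻¹ᵀ = R⁻¹ := by rw [Matrix.transpose_nonsing_inv, hRsym]
  have hQsym : Qᵀ = Q := by
    rw [← Matrix.conjTranspose_eq_transpose_of_trivial]; exact hQ.1
  have hPssym : Pstar.IsSymm := by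
    rw [Matrix.IsSymm, ← Matrix.conjTranspose_eq_transpose_of_trivial]; exact hPstar.1
  -- the radius of the invariant ball
  obtain ⟨r, hrdef⟩ : ∃ x : ℝ, x = (1 + σ) / 2 * δ₀ := ⟨_, rfl⟩
  have hr0 : 0 < r := by rw [hrdef]; nlinarith
  have hrδ : r < δ₀ := by rw [hrdef]; nlinarith
  have hσδr : σ * δ₀ < r := by rw [hrdef]; nlinarith
  -- the compact ball of symmetric matrices and its image
  set Sball : Set (Matrix (Fin n) (Fin n) ℝ) :=
    {P | P.IsSymm ∧ frobNorm (P - Pstar) ≤ r} with hSballdef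
  have hfrobc : Continuous (fun X : Matrix (Fin n) (Fin n) ℝ => frobNorm X) := by
    unfold frobNorm
    exact Real.continuous_sqrt.comp (continuous_finset_sum _ fun i _ =>
      continuous_finset_sum _ fun j _ =>
        ((continuous_apply j).comp (continuous_apply i)).pow 2)
  have hSballclosed : IsClosed Sball := by
    have h1 : Sball = {P : Matrix (Fin n) (Fin n) ℝ | P.IsSymm} ∩
        {P : Matrix (Fin n) (Fin n) ℝ | frobNorm (P - Pstar) ≤ r} := by
      ext P; simp [hSballdef, Set.mem_setOf_eq]
    rw [h1]
    apply IsClosed.inter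
    · have h2 : {P : Matrix (Fin n) (Fin n) ℝ | P.IsSymm} =
          (fun P : Matrix (Fin n) (Fin n) ℝ => Pᵀ - P) ⁻¹' {0} := by
        ext P; simp [Matrix.IsSymm, sub_eq_zero, eq_comm]
      rw [h2]
      exact IsClosed.preimage (continuous_id.matrix_transpose.sub continuous_id)
        isClosed_singleton
    · have h3 : {P : Matrix (Fin n) (Fin n) ℝ | frobNorm (P - Pstar) ≤ r} =
          (fun P : Matrix (Fin n) (Fin n) ℝ => frobNorm (P - Pstar)) ⁻¹' Set.Iic r := rfl
      rw [h3]
      exact IsClosed.preimage (hfrobc.comp (continuous_id.sub continuous_const)) isClosed_Iic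
  have hSballcompact : IsCompact Sball := by
    apply IsCompact.of_isClosed_subset
      (isCompact_closedBall (0 : Matrix (Fin n) (Fin n) ℝ) (r + ‖Pstar‖)) hSballclosed
    intro P hP
    rw [Metric.mem_closedBall, dist_zero_right]
    have h1 : ‖P‖ ≤ ‖P - Pstar‖ + ‖Pstar‖ := by
      have := norm_add_le (P - Pstar) Pstar
      rwa [sub_add_cancel] at this
    have h2 : ‖P - Pstar‖ ≤ frobNorm (P - Pstar) := RPIAux.norm_le_frobNorm _
    have h3 : frobNorm (P - Pstar) ≤ r := hP.2
    linarith
  have hfz : frobNorm (0 : Matrix (Fin n) (Fin n) ℝ) = 0 := by simp [frobNorm]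
  set S : Set (Matrix (Fin n) (Fin n) ℝ) :=
    (fun P : Matrix (Fin n) (Fin n) ℝ => A - B * R⁻¹ * Bᵀ * P) '' Sball with hSdef
  have hφc : Continuous (fun P : Matrix (Fin n) (Fin n) ℝ => A - B * R⁻¹ * Bᵀ * P) := by
    have h1 : Continuous (fun P : Matrix (Fin n) (Fin n) ℝ => (B * R⁻¹ * Bᵀ) * P) :=
      (LinearMap.mulLeft ℝ (B * R⁻¹ * Bᵀ)).continuous_of_finiteDimensional
    have h2 : (fun P : Matrix (Fin n) (Fin n) ℝ => A - B * R⁻¹ * Bᵀ * P)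
        = fun P : Matrix (Fin n) (Fin n) ℝ => A - (B * R⁻¹ * Bᵀ) * P := by
      funext P; rw [Matrix.mul_assoc]
    rw [h2]
    exact continuous_const.sub h1
  have hScomp : IsCompact S := hSballcompact.image hφc
  have hPsmem : Pstar ∈ Sball := ⟨hPssym, by rw [sub_self, hfz]; exact hr0.le⟩
  have hSne : S.Nonempty := ⟨_, Pstar, hPsmem, rfl⟩
  have hSH : ∀ M ∈ S, IsHurwitz M := by
    rintro M ⟨P, hP, rfl⟩
    exact (hcontract P hP.1 (lt_of_le_of_lt hP.2 hrδ)).1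
  obtain ⟨C, hC0, hCb⟩ := RPIAux.uniform_lyap_bound S hScomp hSne hSH
  -- constants
  obtain ⟨β, hβdef⟩ : ∃ x : ℝ, x = frobNorm B + 1 := ⟨_, rfl⟩
  obtain ⟨ρ, hρdef⟩ : ∃ x : ℝ, x = frobNorm R⁻¹ + 1 := ⟨_, rfl⟩
  obtain ⟨rR, hrRdef⟩ : ∃ x : ℝ, x = frobNorm R + 1 := ⟨_, rfl⟩
  obtain ⟨pπ, hpπdef⟩ : ∃ x : ℝ, x = frobNorm Pstar := ⟨_, rfl⟩
  obtain ⟨κ₀, hκdef⟩ : ∃ x : ℝ, x = ρ * β * (pπ + r) := ⟨_, rfl⟩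
  obtain ⟨cE, hcEdef⟩ : ∃ x : ℝ, x = 2 * ρ * (1 + κ₀) := ⟨_, rfl⟩
  obtain ⟨c₄, hc₄def⟩ : ∃ x : ℝ, x = 2 * β * (pπ + σ * r) + rR * (2 * κ₀ + 1) := ⟨_, rfl⟩
  obtain ⟨C₃, hC₃def⟩ : ∃ x : ℝ, x = 2 * C * c₄ * cE := ⟨_, rfl⟩
  have hβ0 : 0 < β := by rw [hβdef]; have := RPIAux.frobNorm_nonneg B; linarith
  have hρ0 : 0 < ρ := by rw [hρdef]; have := RPIAux.frobNorm_nonneg (R⁻¹); linarith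
  have hrR0 : 0 < rR := by rw [hrRdef]; have := RPIAux.frobNorm_nonneg R; linarith
  have hpπ0 : 0 ≤ pπ := by rw [hpπdef]; exact RPIAux.frobNorm_nonneg Pstar
  have hκ0 : 0 < κ₀ := by
    rw [hκdef]; exact mul_pos (mul_pos hρ0 hβ0) (by linarith)
  have hcE0 : 0 < cE := by rw [hcEdef]; exact mul_pos (by linarith) (by linarith)
  have hc₄0 : 0 < c₄ := by
    rw [hc₄def]
    have h1 : 0 ≤ pπ + σ * r := by nlinarith
    nlinarith
  have hC₃0 : 0 < C₃ := by
    rw [hC₃def]; exact mul_pos (mul_pos (by linarith) hc₄0) hcE0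
  obtain ⟨δ₁, hδ₁def⟩ : ∃ x : ℝ, x = min (min (1 / (2 * ρ)) (1 / cE))
      (min (1 / (4 * C * β * cE)) ((1 - σ) * r / C₃)) := ⟨_, rfl⟩
  have hδ₁0 : 0 < δ₁ := by
    rw [hδ₁def]
    apply lt_min (lt_min _ _) (lt_min _ _)
    · exact div_pos one_pos (by linarith)
    · exact div_pos one_pos hcE0
    · exact div_pos one_pos
        (mul_pos (mul_pos (mul_pos (by norm_num : (0:ℝ) < 4) hC0) hβ0) hcE0)
    · exact div_pos (mul_pos (by linarith) hr0) hC₃0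
  refine ⟨δ₁, hδ₁0, ?_⟩
  intro ΔG Pt Kh hdata h0sym h0ball hK1 hbdd hsup htendd
  have hd : ∀ i, 1 ≤ i → frobNorm (ΔG i) < δ₁ := by
    intro i hi
    obtain ⟨j, rfl⟩ : ∃ j, i = j + 1 := ⟨i - 1, by omega⟩
    exact lt_of_le_of_lt (le_ciSup hbdd j) hsup
  -- the exact first step
  have hstep0 : frobNorm (Pt 1 - Pstar) ≤ σ * frobNorm (Pt 0 - Pstar) := by
    obtain ⟨_, hP1sym, hLyap1, _⟩ := hdata 1 le_rfl
    refine (hcontract (Pt 0) h0sym h0ball).2 (Pt 1) hP1sym ?_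
    rw [hK1] at hLyap1
    have hassoc : B * (R⁻¹ * Bᵀ * Pt 0) = B * R⁻¹ * Bᵀ * Pt 0 := by
      simp only [Matrix.mul_assoc]
    rw [hassoc] at hLyap1
    have hKRK : (R⁻¹ * Bᵀ * Pt 0)ᵀ * R * (R⁻¹ * Bᵀ * Pt 0)
        = Pt 0 * B * R⁻¹ * Bᵀ * Pt 0 := by
      simp only [Matrix.transpose_mul, Matrix.transpose_transpose, hRisym, h0sym.eq]
      simp only [Matrix.mul_assoc]
      rw [Matrix.nonsing_inv_mul_cancel_left _ _ hRdet]
    rw [hKRK] at hLyap1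
    rw [add_assoc, add_eq_zero_iff_eq_neg] at hLyap1
    exact hLyap1
  -- the key one-step estimate
  have hstep : ∀ i, 1 ≤ i → frobNorm (Pt i - Pstar) ≤ r →
      frobNorm (Pt (i + 1) - Pstar)
        ≤ σ * frobNorm (Pt i - Pstar) + C₃ * frobNorm (ΔG i) := by
    intro i hi hPball
    obtain ⟨hGsym, hPsym, _, hgain⟩ := hdata i hi
    obtain ⟨_, hP'sym, hLyap, _⟩ := hdata (i + 1) (le_trans hi (Nat.le_succ i))
    set P : Matrix (Fin n) (Fin n) ℝ := Pt i with hPdef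
    set P' : Matrix (Fin n) (Fin n) ℝ := Pt (i + 1) with hP'def
    set Kh' : Matrix (Fin m) (Fin n) ℝ := Kh (i + 1) with hKh'def
    set G21 : Matrix (Fin m) (Fin n) ℝ := (ΔG i).toBlocks₂₁ with hG21def
    set G22 : Matrix (Fin m) (Fin m) ℝ := (ΔG i).toBlocks₂₂ with hG22def
    obtain ⟨d, hddef⟩ : ∃ x : ℝ, x = frobNorm (ΔG i) := ⟨_, rfl⟩
    have hd0 : 0 ≤ d := by rw [hddef]; exact RPIAux.frobNorm_nonneg _
    have hdδ : d < δ₁ := by rw [hddef]; exact hd i hi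
    have hG21b : frobNorm G21 ≤ d := by
      rw [hddef]; exact RPIAux.frobNorm_toBlocks₂₁_le _
    have hG22b : frobNorm G22 ≤ d := by
      rw [hddef]; exact RPIAux.frobNorm_toBlocks₂₂_le _
    obtain ⟨K, hKdef⟩ : ∃ X : Matrix (Fin m) (Fin n) ℝ, X = R⁻¹ * Bᵀ * P := ⟨_, rfl⟩
    obtain ⟨E, hEdef⟩ : ∃ X : Matrix (Fin m) (Fin n) ℝ, X = Kh' - K := ⟨_, rfl⟩
    have hKhE : Kh' = K + E := by rw [hEdef]; abel
    -- express E through the disturbance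
    have hgain' : Kh' + R⁻¹ * (G22 * Kh') = R⁻¹ * (Bᵀ * P) + R⁻¹ * G21 := by
      have h := congrArg (fun X : Matrix (Fin m) (Fin n) ℝ => R⁻¹ * X) hgain
      simp only [Matrix.add_mul, Matrix.mul_add] at h
      rwa [← Matrix.mul_assoc R⁻¹ R Kh', Matrix.nonsing_inv_mul _ hRdet,
        Matrix.one_mul] at h
    have hEeq : E = R⁻¹ * G21 - R⁻¹ * (G22 * Kh') := by
      have h2 : Kh' - R⁻¹ * (Bᵀ * P) = R⁻¹ * G21 - R⁻¹ * (G22 * Kh') := by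
        rw [sub_eq_sub_iff_add_eq_add, hgain']
        abel
      rw [hEdef, hKdef, Matrix.mul_assoc]
      exact h2
    -- a priori gain bounds
    have hβle : frobNorm B ≤ β := by rw [hβdef]; linarith
    have hρle : frobNorm R⁻¹ ≤ ρ := by rw [hρdef]; linarith
    have hrRle : frobNorm R ≤ rR := by rw [hrRdef]; linarith
    have hPb : frobNorm P ≤ pπ + r := by
      have h1 := RPIAux.frobNorm_le_add P Pstar
      rw [hpπdef]; linarith
    have hKb : frobNorm K ≤ κ₀ := by
      rw [hKdef, hκdef]
      calc frobNorm (R⁻¹ * Bᵀ * P) ≤ frobNorm R⁻¹ * frobNorm Bᵀ * frobNorm P :=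
            RPIAux.frobNorm_mul₃_le _ _ _
        _ = frobNorm R⁻¹ * frobNorm B * frobNorm P := by rw [RPIAux.frobNorm_transpose]
        _ ≤ ρ * β * (pπ + r) := by
            apply mul_le_mul _ hPb (RPIAux.frobNorm_nonneg _) (mul_pos hρ0 hβ0).le
            exact mul_le_mul hρle hβle (RPIAux.frobNorm_nonneg _) hρ0.le
    have hEnn : 0 ≤ frobNorm E := RPIAux.frobNorm_nonneg _
    have hKh'nn : 0 ≤ frobNorm Kh' := RPIAux.frobNorm_nonneg _
    -- bound on E
    have hρd : ρ * d ≤ 1 / 2 := by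
      have h1 : δ₁ ≤ 1 / (2 * ρ) := by
        rw [hδ₁def]; exact le_trans (min_le_left _ _) (min_le_left _ _)
      have h2 : ρ * δ₁ ≤ ρ * (1 / (2 * ρ)) := mul_le_mul_of_nonneg_left h1 hρ0.le
      have h3 : ρ * (1 / (2 * ρ)) = 1 / 2 := by field_simp
      have h4 : ρ * d ≤ ρ * δ₁ := mul_le_mul_of_nonneg_left hdδ.le hρ0.le
      linarith
    have he1 : frobNorm E ≤ ρ * d + ρ * (d * frobNorm Kh') := by
      rw [hEeq]
      have h1 : frobNorm (R⁻¹ * G21) ≤ ρ * d :=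
        le_trans (RPIAux.frobNorm_mul_le _ _)
          (mul_le_mul hρle hG21b (RPIAux.frobNorm_nonneg _) hρ0.le)
      have h2 : frobNorm (R⁻¹ * (G22 * Kh')) ≤ ρ * (d * frobNorm Kh') := by
        refine le_trans (RPIAux.frobNorm_mul_le _ _) ?_
        refine mul_le_mul hρle ?_ (RPIAux.frobNorm_nonneg _) hρ0.le
        exact le_trans (RPIAux.frobNorm_mul_le _ _)
          (mul_le_mul_of_nonneg_right hG22b hKh'nn)
      have h3 := RPIAux.frobNorm_sub_le (R⁻¹ * G21) (R⁻¹ * (G22 * Kh'))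
      linarith
    have he2 : frobNorm Kh' ≤ κ₀ + frobNorm E := by
      rw [hKhE]
      have := RPIAux.frobNorm_add_le K E
      linarith
    have hEb : frobNorm E ≤ cE * d := by
      have h1 : ρ * (d * frobNorm Kh') ≤ ρ * (d * (κ₀ + frobNorm E)) := by
        apply mul_le_mul_of_nonneg_left _ hρ0.le
        exact mul_le_mul_of_nonneg_left he2 hd0
      have h2 : (ρ * d) * frobNorm E ≤ (1 / 2) * frobNorm E :=
        mul_le_mul_of_nonneg_right hρd hEnn
      have h3 : ρ * (d * (κ₀ + frobNorm E)) = ρ * d * κ₀ + (ρ * d) * frobNorm E := by ring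
      have h4 : cE * d = 2 * (ρ * d) + 2 * (ρ * d * κ₀) := by rw [hcEdef]; ring
      linarith [he1, h1, h2, h3, h4]
    have hEb1 : frobNorm E ≤ 1 := by
      have h1 : δ₁ ≤ 1 / cE := by
        rw [hδ₁def]; exact le_trans (min_le_left _ _) (min_le_right _ _)
      have h2 : cE * d ≤ cE * δ₁ := mul_le_mul_of_nonneg_left hdδ.le hcE0.le
      have h3 : cE * δ₁ ≤ cE * (1 / cE) := mul_le_mul_of_nonneg_left h1 hcE0.le
      have h4 : cE * (1 / cE) = 1 := by field_simp [hcE0.ne']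
      linarith
    have hKh'b : frobNorm Kh' ≤ κ₀ + 1 := by linarith
    -- the exact policy improvement target
    have hMS : (A - B * R⁻¹ * Bᵀ * P) ∈ S := ⟨P, ⟨hPsym, hPball⟩, rfl⟩
    have hMHur : IsHurwitz (A - B * R⁻¹ * Bᵀ * P) :=
      (hcontract P hPsym (lt_of_le_of_lt hPball hrδ)).1
    obtain ⟨Φ, hΦ⟩ := (RPIAux.lyapLM_bijective hMHur).2 (-(Q + P * B * R⁻¹ * Bᵀ * P))
    have hΦeq : (A - B * R⁻¹ * Bᵀ * P)ᵀ * Φ + Φ * (A - B * R⁻¹ * Bᵀ * P)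
        = -(Q + P * B * R⁻¹ * Bᵀ * P) := hΦ
    have hXsym : (P * B * R⁻¹ * Bᵀ * P)ᵀ = P * B * R⁻¹ * Bᵀ * P := by
      simp only [Matrix.transpose_mul, Matrix.transpose_transpose, hRisym, hPsym.eq]
      simp only [Matrix.mul_assoc]
    have hΦsym : Φ.IsSymm := by
      have hinj := (RPIAux.lyapLM_bijective hMHur).1
      have h1 : RPIAux.lyapLM (A - B * R⁻¹ * Bᵀ * P) Φᵀ
          = RPIAux.lyapLM (A - B * R⁻¹ * Bᵀ * P) Φ := by
        show (A - B * R⁻¹ * Bᵀ * P)ᵀ * Φᵀ + Φᵀ * (A - B * R⁻¹ * Bᵀ * P)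
            = (A - B * R⁻¹ * Bᵀ * P)ᵀ * Φ + Φ * (A - B * R⁻¹ * Bᵀ * P)
        have h2 : (A - B * R⁻¹ * Bᵀ * P)ᵀ * Φᵀ + Φᵀ * (A - B * R⁻¹ * Bᵀ * P)
            = ((A - B * R⁻¹ * Bᵀ * P)ᵀ * Φ + Φ * (A - B * R⁻¹ * Bᵀ * P))ᵀ := by
          rw [Matrix.transpose_add, Matrix.transpose_mul, Matrix.transpose_mul,
            Matrix.transpose_transpose]
          abel
        rw [h2, hΦeq, Matrix.transpose_neg, Matrix.transpose_add, hQsym, hXsym]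
      exact hinj h1
    have hΦc : frobNorm (Φ - Pstar) ≤ σ * frobNorm (P - Pstar) :=
      (hcontract P hPsym (lt_of_le_of_lt hPball hrδ)).2 Φ hΦsym hΦeq
    have hΦb : frobNorm Φ ≤ pπ + σ * r := by
      have h1 := RPIAux.frobNorm_le_add Φ Pstar
      have h2 : σ * frobNorm (P - Pstar) ≤ σ * r :=
        mul_le_mul_of_nonneg_left hPball hσ0.le
      rw [hpπdef]
      linarith
    -- the Lyapunov equation for the difference
    have hKRK : Kᵀ * R * K = P * B * R⁻¹ * Bᵀ * P := by
      rw [hKdef]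
      simp only [Matrix.transpose_mul, Matrix.transpose_transpose, hRisym, hPsym.eq]
      simp only [Matrix.mul_assoc]
      rw [Matrix.nonsing_inv_mul_cancel_left _ _ hRdet]
    obtain ⟨W, hWdef⟩ : ∃ X : Matrix (Fin n) (Fin n) ℝ,
      X = (B * E)ᵀ * P' + P' * (B * E) - Eᵀ * R * Kh' - Kᵀ * R * E := ⟨_, rfl⟩
    have hLyapD : (A - B * R⁻¹ * Bᵀ * P)ᵀ * (P' - Φ) + (P' - Φ) * (A - B * R⁻¹ * Bᵀ * P)
        = W := by
      have hsub : A - B * Kh' = (A - B * R⁻¹ * Bᵀ * P) - B * E := by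
        rw [hKhE, hKdef, Matrix.mul_add]
        simp only [← Matrix.mul_assoc]
        abel
      have h1 : ((A - B * R⁻¹ * Bᵀ * P) - B * E)ᵀ * P'
          + P' * ((A - B * R⁻¹ * Bᵀ * P) - B * E) + Q + (K + E)ᵀ * R * (K + E) = 0 := by
        rw [← hsub, ← hKhE]
        exact hLyap
      have h2 : (A - B * R⁻¹ * Bᵀ * P)ᵀ * Φ + Φ * (A - B * R⁻¹ * Bᵀ * P)
          + (Q + Kᵀ * R * K) = 0 := by
        rw [hΦeq, hKRK]; abel
      have expand : (A - B * R⁻¹ * Bᵀ * P)ᵀ * (P' - Φ)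
            + (P' - Φ) * (A - B * R⁻¹ * Bᵀ * P) - W
          = (((A - B * R⁻¹ * Bᵀ * P) - B * E)ᵀ * P'
              + P' * ((A - B * R⁻¹ * Bᵀ * P) - B * E) + Q + (K + E)ᵀ * R * (K + E))
            - ((A - B * R⁻¹ * Bᵀ * P)ᵀ * Φ + Φ * (A - B * R⁻¹ * Bᵀ * P)
              + (Q + Kᵀ * R * K)) := by
        rw [hWdef, hKhE]
        simp only [Matrix.transpose_sub, Matrix.transpose_add, Matrix.transpose_mul,
          Matrix.transpose_transpose, Matrix.sub_mul, Matrix.mul_sub, Matrix.add_mul,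
          Matrix.mul_add]
        simp only [← Matrix.mul_assoc]
        abel
      have h3 : (A - B * R⁻¹ * Bᵀ * P)ᵀ * (P' - Φ)
          + (P' - Φ) * (A - B * R⁻¹ * Bᵀ * P) - W = 0 := by
        rw [expand, h1, h2, sub_zero]
      exact sub_eq_zero.mp h3
    -- norm estimates
    have hDb : frobNorm (P' - Φ) ≤ C * frobNorm W := by
      have h1 := hCb _ hMS (P' - Φ)
      rwa [hLyapD] at h1
    obtain ⟨fD, hfDdef⟩ : ∃ x : ℝ, x = frobNorm (P' - Φ) := ⟨_, rfl⟩
    obtain ⟨fE, hfEdef⟩ : ∃ x : ℝ, x = frobNorm E := ⟨_, rfl⟩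
    rw [← hfDdef] at hDb
    rw [← hfEdef] at hEnn hEb hEb1 he1 he2
    have hfD0 : 0 ≤ fD := by rw [hfDdef]; exact RPIAux.frobNorm_nonneg _
    have hP'b : frobNorm P' ≤ fD + (pπ + σ * r) := by
      have h1 := RPIAux.frobNorm_le_add P' Φ
      linarith [hfDdef]
    have hBE : frobNorm (B * E) ≤ β * fE := by
      rw [hfEdef]
      exact le_trans (RPIAux.frobNorm_mul_le _ _)
        (mul_le_mul_of_nonneg_right hβle (RPIAux.frobNorm_nonneg _))
    have ht1 : frobNorm ((B * E)ᵀ * P') ≤ β * fE * (fD + (pπ + σ * r)) := by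
      refine le_trans (RPIAux.frobNorm_mul_le _ _) ?_
      rw [RPIAux.frobNorm_transpose]
      exact mul_le_mul hBE hP'b (RPIAux.frobNorm_nonneg _) (mul_nonneg hβ0.le hEnn)
    have ht2 : frobNorm (P' * (B * E)) ≤ (fD + (pπ + σ * r)) * (β * fE) := by
      refine le_trans (RPIAux.frobNorm_mul_le _ _) ?_
      have hσr0 : (0:ℝ) ≤ σ * r := (mul_pos hσ0 hr0).le
      have hsum0 : (0:ℝ) ≤ fD + (pπ + σ * r) := by linarith
      exact mul_le_mul hP'b hBE (RPIAux.frobNorm_nonneg _) hsum0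
    have ht3 : frobNorm (Eᵀ * R * Kh') ≤ fE * rR * (κ₀ + 1) := by
      rw [hfEdef]
      refine le_trans (RPIAux.frobNorm_mul₃_le _ _ _) ?_
      rw [RPIAux.frobNorm_transpose]
      apply mul_le_mul _ hKh'b hKh'nn (mul_nonneg (RPIAux.frobNorm_nonneg _) hrR0.le)
      exact mul_le_mul_of_nonneg_left hrRle (RPIAux.frobNorm_nonneg _)
    have ht4 : frobNorm (Kᵀ * R * E) ≤ κ₀ * rR * fE := by
      rw [hfEdef]
      refine le_trans (RPIAux.frobNorm_mul₃_le _ _ _) ?_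
      rw [RPIAux.frobNorm_transpose]
      apply mul_le_mul _ le_rfl (RPIAux.frobNorm_nonneg _) (mul_pos hκ0 hrR0).le
      exact mul_le_mul hKb hrRle (RPIAux.frobNorm_nonneg _) hκ0.le
    have hWb : frobNorm W ≤ fE * c₄ + 2 * β * fE * fD := by
      have h1 := RPIAux.frobNorm_sub_le ((B * E)ᵀ * P' + P' * (B * E) - Eᵀ * R * Kh')
        (Kᵀ * R * E)
      have h2 := RPIAux.frobNorm_sub_le ((B * E)ᵀ * P' + P' * (B * E)) (Eᵀ * R * Kh')
      have h3 := RPIAux.frobNorm_add_le ((B * E)ᵀ * P') (P' * (B * E))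
      have h4 : fE * c₄ = 2 * β * (pπ + σ * r) * fE + rR * (2 * κ₀ + 1) * fE := by
        rw [hc₄def]; ring
      rw [hWdef]
      have hsum : frobNorm ((B * E)ᵀ * P' + P' * (B * E) - Eᵀ * R * Kh' - Kᵀ * R * E)
          ≤ β * fE * (fD + (pπ + σ * r)) + (fD + (pπ + σ * r)) * (β * fE)
            + fE * rR * (κ₀ + 1) + κ₀ * rR * fE := by
        linarith [h1, h2, h3, ht1, ht2, ht3, ht4]
      have heq : β * fE * (fD + (pπ + σ * r)) + (fD + (pπ + σ * r)) * (β * fE)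
            + fE * rR * (κ₀ + 1) + κ₀ * rR * fE = fE * c₄ + 2 * β * fE * fD := by
        rw [hc₄def]; ring
      linarith [hsum, heq]
    have habs : 2 * C * β * fE ≤ 1 / 2 := by
      have h1 : δ₁ ≤ 1 / (4 * C * β * cE) := by
        rw [hδ₁def]; exact le_trans (min_le_right _ _) (min_le_left _ _)
      have h2 : fE ≤ cE * δ₁ := by
        have := mul_le_mul_of_nonneg_left hdδ.le hcE0.le
        linarith
      have h3 : cE * δ₁ ≤ cE * (1 / (4 * C * β * cE)) :=
        mul_le_mul_of_nonneg_left h1 hcE0.le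
      have h4 : cE * (1 / (4 * C * β * cE)) = 1 / (4 * C * β) := by
        field_simp
      have h5 : 2 * C * β * fE ≤ 2 * C * β * (1 / (4 * C * β)) := by
        apply mul_le_mul_of_nonneg_left _
          (mul_nonneg (mul_nonneg (by norm_num) hC0.le) hβ0.le)
        linarith
      have h6 : 2 * C * β * (1 / (4 * C * β)) = 1 / 2 := by
        rw [mul_one_div, div_eq_div_iff (by positivity) (by norm_num)]
        ring
      linarith
    have hDb2 : fD ≤ C₃ * d := by
      have h1 : C * frobNorm W ≤ C * (fE * c₄ + 2 * β * fE * fD) :=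
        mul_le_mul_of_nonneg_left hWb hC0.le
      have h2 : C * (fE * c₄ + 2 * β * fE * fD) = C * c₄ * fE + (2 * C * β * fE) * fD := by
        ring
      have h3 : (2 * C * β * fE) * fD ≤ (1 / 2) * fD :=
        mul_le_mul_of_nonneg_right habs hfD0
      have h4 : fD ≤ 2 * C * c₄ * fE := by linarith
      have h5 : 2 * C * c₄ * fE ≤ 2 * C * c₄ * (cE * d) := by
        apply mul_le_mul_of_nonneg_left hEb
        exact mul_nonneg (mul_nonneg (by norm_num) hC0.le) hc₄0.le
      have h6 : 2 * C * c₄ * (cE * d) = C₃ * d := by rw [hC₃def]; ring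
      linarith
    have hfinal := RPIAux.frobNorm_sub_le₃ P' Φ Pstar
    rw [hddef] at hDb2
    linarith [hfinal, hfDdef, hDb2, hΦc]
  -- invariance of the ball
  have hball : ∀ i, 1 ≤ i → frobNorm (Pt i - Pstar) ≤ r := by
    intro i hi
    induction i, hi using Nat.le_induction with
    | base =>
      have h1 : σ * frobNorm (Pt 0 - Pstar) ≤ σ * δ₀ :=
        mul_le_mul_of_nonneg_left h0ball.le hσ0.le
      linarith
    | succ k hk ih =>
      have h1 := hstep k hk ih
      have h2 : C₃ * frobNorm (ΔG k) ≤ C₃ * δ₁ :=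
        mul_le_mul_of_nonneg_left (hd k hk).le hC₃0.le
      have h3 : δ₁ ≤ (1 - σ) * r / C₃ := by
        rw [hδ₁def]; exact le_trans (min_le_right _ _) (min_le_right _ _)
      have h4 : C₃ * δ₁ ≤ C₃ * ((1 - σ) * r / C₃) :=
        mul_le_mul_of_nonneg_left h3 hC₃0.le
      have h5 : C₃ * ((1 - σ) * r / C₃) = (1 - σ) * r := by
        field_simp
      have h6 : σ * frobNorm (Pt k - Pstar) ≤ σ * r :=
        mul_le_mul_of_nonneg_left ih hσ0.le
      linarith
  -- conclude with the ISS limit lemma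
  apply RPIAux.iss_limit σ hσ0 hσ1 r C₃ hC₃0.le _ _
    (fun i => RPIAux.frobNorm_nonneg _) hball
    (fun i => RPIAux.frobNorm_nonneg _)
    (fun i hi => hstep i hi (hball i hi)) htendd
end
end
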